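/- Let (X,d) be a complete metric space, F = {F_i : i ∈ ℕ} a countable family of contraction maps, ρ a probability sequence, and μ an invariant measure for (F, ρ) (μ = Σ_i ρ_i (F_i)_♯μ). Then supp μ = cl(P), where P is the set of fixed points of finite compositions of members of F. -/

import Mathlib

set_option maxHeartbeats 1000000


open Metric Set MeasureTheory
open scoped NNReal ENNReal

/-- The set of fixed points of finite (nonempty) compositions of members of the family `F`. -/
def fixedPtsOfComps {X : Type*} (F : ℕ → X → X) : Set X :=
  {x : X | ∃ l : List ℕ, l ≠ [] ∧ l.foldr (fun i y => F i y) x = x}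

/-- The support of a measure on a metric space: points all of whose balls have
positive measure. -/
def msupp {X : Type*} [MetricSpace X] [MeasurableSpace X] (μ : Measure X) : Set X :=
  {x : X | ∀ ε : ℝ, 0 < ε → 0 < μ (Metric.ball x ε)}

namespace SuppAux

variable {X : Type*} [MetricSpace X]

/-- Composition of the maps along a list. -/
def fold (F : ℕ → X → X) (l : List ℕ) (x : X) : X := l.foldr (fun i y => F i y) x

omit [MetricSpace X] in
lemma fold_cons_eq (F : ℕ → X → X) (i : ℕ) (t : List ℕ) :
    fold F (i :: t) = F i ∘ fold F t := rfl

omit [MetricSpace X] in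
lemma fold_nil_eq (F : ℕ → X → X) : fold F [] = id := rfl

omit [MetricSpace X] in
lemma fold_append (F : ℕ → X → X) (l₁ l₂ : List ℕ) (x : X) :
    fold F (l₁ ++ l₂) x = fold F l₁ (fold F l₂ x) := List.foldr_append ..

omit [MetricSpace X] in
lemma fold_flatten_replicate (F : ℕ → X → X) (l : List ℕ) (n : ℕ) (x : X) :
    fold F (List.replicate n l).flatten x = (fold F l)^[n] x := by
  induction n with
  | zero => rfl
  | succ n ih =>
      rw [List.replicate_succ, List.flatten_cons, fold_append, ih,
        Function.iterate_succ_apply']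

lemma fold_lipschitz (F : ℕ → X → X) (r : ℕ → ℝ≥0) (h : ∀ i, LipschitzWith (r i) (F i)) :
    ∀ l : List ℕ, LipschitzWith (l.map r).prod (fold F l)
  | [] => by simpa [fold_nil_eq] using LipschitzWith.id
  | i :: t => by
      have h2 := (h i).comp (fold_lipschitz F r h t)
      rw [fold_cons_eq]
      simpa using h2

lemma map_prod_le_one (r : ℕ → ℝ≥0) (h : ∀ i, r i ≤ 1) : ∀ l : List ℕ, (l.map r).prod ≤ 1
  | [] => le_refl 1
  | i :: t => by
      simp only [List.map_cons, List.prod_cons]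
      exact mul_le_one' (h i) (map_prod_le_one r h t)

lemma fold_contracting (F : ℕ → X → X) (r : ℕ → ℝ≥0) (h : ∀ i, ContractingWith (r i) (F i))
    (l : List ℕ) (hl : l ≠ []) : ContractingWith (l.map r).prod (fold F l) := by
  obtain ⟨i, t, rfl⟩ := List.exists_cons_of_ne_nil hl
  refine ⟨?_, fold_lipschitz F r (fun j => (h j).2) _⟩
  simp only [List.map_cons, List.prod_cons]
  calc r i * (t.map r).prod
      ≤ r i * 1 := mul_le_mul_right (map_prod_le_one r (fun j => (h j).1.le) t) _
    _ = r i := mul_one _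
    _ < 1 := (h i).1

omit [MetricSpace X] in
lemma prod_pos (ρ : ℕ → ℝ≥0) (h : ∀ i, 0 < ρ i) :
    ∀ l : List ℕ, (l.map fun i => ((ρ i : ℝ≥0∞))).prod ≠ 0
  | [] => one_ne_zero
  | i :: t => by
      simp only [List.map_cons, List.prod_cons]
      exact mul_ne_zero (by exact_mod_cast (h i).ne') (prod_pos ρ h t)

end SuppAux

open SuppAux

theorem support_invariant_measure_eq_closure_fixedPts
    {X : Type*} [MetricSpace X] [CompleteSpace X] [MeasurableSpace X] [BorelSpace X]
    (F : ℕ → X → X) (hF : ∀ i, ∃ r : ℝ≥0, ContractingWith r (F i))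
    (ρ : ℕ → ℝ≥0) (hρ : ∀ i, 0 < ρ i ∧ ρ i < 1) (hρs : ∑' i, ρ i = 1)
    (μ : Measure X) [IsProbabilityMeasure μ]
    (hinv : μ = Measure.sum (fun i => (ρ i : ℝ≥0∞) • μ.map (F i))) :
    msupp μ = closure (fixedPtsOfComps F) := by
  classical
  -- basic data
  have hXne : Nonempty X := by
    by_contra h
    have h0 : μ Set.univ = 1 := measure_univ
    rw [Set.univ_eq_empty_iff.2 (not_nonempty_iff.1 h), measure_empty] at h0
    exact zero_ne_one h0
  set r : ℕ → ℝ≥0 := fun i => (hF i).choose with hr_def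
  have hr : ∀ i, ContractingWith (r i) (F i) := fun i => (hF i).choose_spec
  have hFm : ∀ i, Measurable (F i) := fun i => (hr i).2.continuous.measurable
  set P := fixedPtsOfComps F with hP_def
  set A := closure P with hA_def
  have hAclosed : IsClosed A := isClosed_closure
  have hPne : P.Nonempty :=
    ⟨ContractingWith.fixedPoint (F 0) (hr 0), [0], by simp,
      ContractingWith.fixedPoint_isFixedPt (hr 0)⟩
  have hAne : A.Nonempty := hPne.closure
  -- smul monotonicity for measures
  have hsmul_mono : ∀ (c : ℝ≥0∞) (ν₁ ν₂ : Measure X), ν₁ ≤ ν₂ → c • ν₁ ≤ c • ν₂ := by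
    intro c ν₁ ν₂ h
    intro t
    simp only [Measure.smul_apply, smul_eq_mul]
    exact mul_le_mul_right (h t) c
  -- one-step domination
  have hdom : ∀ i, (ρ i : ℝ≥0∞) • μ.map (F i) ≤ μ := by
    intro i
    conv_rhs => rw [hinv]
    exact Measure.le_sum _ i
  -- iterated domination along words
  have key_map : ∀ l : List ℕ,
      ((l.map fun i => ((ρ i : ℝ≥0∞))).prod) • μ.map (fold F l) ≤ μ := by
    intro l
    induction l with
    | nil => simp [fold_nil_eq, Measure.map_id]
    | cons i t ih =>
        have hfm : Measurable (fold F t) :=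
          (fold_lipschitz F r (fun j => (hr j).2) t).continuous.measurable
        have h3 : ((t.map fun j => ((ρ j : ℝ≥0∞))).prod) • μ.map (F i ∘ fold F t)
            ≤ μ.map (F i) := by
          have := Measure.map_mono ih (hFm i)
          rwa [Measure.map_smul, Measure.map_map (hFm i) hfm] at this
        calc (((i :: t).map fun j => ((ρ j : ℝ≥0∞))).prod) • μ.map (fold F (i :: t))
            = (ρ i : ℝ≥0∞) • (((t.map fun j => ((ρ j : ℝ≥0∞))).prod)
                • μ.map (F i ∘ fold F t)) := by
              rw [List.map_cons, List.prod_cons, fold_cons_eq, smul_smul]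
          _ ≤ (ρ i : ℝ≥0∞) • μ.map (F i) := hsmul_mono _ _ _ h3
          _ ≤ μ := hdom i
  ------------------------------------------------------------------
  -- Part 1 : P ⊆ msupp μ
  ------------------------------------------------------------------
  have hPsub : P ⊆ msupp μ := by
    rintro p ⟨l, hl, hfix⟩
    set G := fold F l with hG_def
    set K := (l.map r).prod with hK_def
    have hK : ContractingWith K G := fold_contracting F r hr l hl
    have hGm : Measurable G := hK.2.continuous.measurable
    set w : ℝ≥0∞ := (l.map fun i => ((ρ i : ℝ≥0∞))).prod with hw_def
    have hw : w ≠ 0 := prod_pos ρ (fun i => (hρ i).1) l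
    have hGfix : Function.IsFixedPt G p := hfix
    have hiter : ∀ n : ℕ, (w ^ n) • μ.map (G^[n]) ≤ μ := by
      intro n
      induction n with
      | zero => simp [Measure.map_id]
      | succ n ih =>
          have h3 : (w ^ n) • μ.map (G ∘ G^[n]) ≤ μ.map G := by
            have := Measure.map_mono ih hGm
            rwa [Measure.map_smul, Measure.map_map hGm (hGm.iterate n)] at this
          calc (w ^ (n + 1)) • μ.map (G^[n + 1])
              = w • ((w ^ n) • μ.map (G ∘ G^[n])) := by
                rw [Function.iterate_succ', smul_smul, ← pow_succ']
          _ ≤ w • μ.map G := hsmul_mono _ _ _ h3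
          _ ≤ μ := key_map l
    intro ε hε
    -- find a ball around p with positive measure
    obtain ⟨R0, hR0⟩ : ∃ R : ℕ, μ (ball p R) ≠ 0 := by
      by_contra h
      push_neg at h
      have huniv : (Set.univ : Set X) ⊆ ⋃ n : ℕ, ball p n := by
        intro x _
        exact mem_iUnion.2 ⟨⌈dist x p⌉₊ + 1, by
          simp only [mem_ball]
          calc dist x p ≤ (⌈dist x p⌉₊ : ℝ) := Nat.le_ceil _
            _ < ((⌈dist x p⌉₊ + 1 : ℕ) : ℝ) := by push_cast; linarith⟩
      have h1 : μ Set.univ = 0 :=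
        measure_mono_null huniv (measure_iUnion_null fun n => h n)
      rw [measure_univ] at h1
      exact one_ne_zero h1
    set Rr : ℝ := R0 + 1 with hRr_def
    have hRrpos : (0 : ℝ) < Rr := by positivity
    have hRr : μ (ball p Rr) ≠ 0 := by
      refine fun h0 => hR0 (measure_mono_null (ball_subset_ball ?_) h0)
      simp [hRr_def]
    -- choose n with K^n * Rr < ε
    obtain ⟨n, hn⟩ : ∃ n : ℕ, ((K : ℝ)) ^ n < ε / Rr := by
      refine exists_pow_lt_of_lt_one (by positivity) ?_
      exact_mod_cast hK.1
    have hmaps : MapsTo (G^[n]) (ball p Rr) (ball p ε) := by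
      intro y hy
      simp only [mem_ball] at hy ⊢
      have h1 : dist (G^[n] y) p = dist (G^[n] y) (G^[n] p) := by
        rw [hGfix.iterate n]
      have h2 : dist (G^[n] y) (G^[n] p) ≤ (K : ℝ) ^ n * dist y p := by
        have := (hK.2.iterate n).dist_le_mul y p
        simpa using this
      calc dist (G^[n] y) p ≤ (K : ℝ) ^ n * dist y p := by rw [h1]; exact h2
        _ ≤ (K : ℝ) ^ n * Rr := mul_le_mul_of_nonneg_left hy.le (by positivity)
        _ < ε := by
            rw [← lt_div_iff₀ hRrpos]
            exact hn
    have h4 : (w ^ n) * μ ((G^[n]) ⁻¹' ball p ε) ≤ μ (ball p ε) := by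
      have := hiter n (ball p ε)
      simpa [Measure.smul_apply, Measure.map_apply (hGm.iterate n) measurableSet_ball]
        using this
    have h5 : μ (ball p Rr) ≤ μ ((G^[n]) ⁻¹' ball p ε) :=
      measure_mono fun y hy => hmaps hy
    calc (0 : ℝ≥0∞) < (w ^ n) * μ (ball p Rr) :=
          ENNReal.mul_pos (pow_ne_zero n hw) hRr
      _ ≤ (w ^ n) * μ ((G^[n]) ⁻¹' ball p ε) := mul_le_mul_right h5 _
      _ ≤ μ (ball p ε) := h4
  -- msupp is closed
  have hmsupp_closed : IsClosed (msupp μ) := by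
    rw [← isOpen_compl_iff, Metric.isOpen_iff]
    intro x hx
    simp only [msupp, mem_compl_iff, mem_setOf_eq, not_forall] at hx
    obtain ⟨ε, hε, h0⟩ := hx
    refine ⟨ε / 2, by positivity, fun y hy => ?_⟩
    simp only [msupp, mem_compl_iff, mem_setOf_eq, not_forall]
    refine ⟨ε / 2, by positivity, ?_⟩
    simp only [mem_ball] at hy
    have hsub : ball y (ε / 2) ⊆ ball x ε := by
      apply ball_subset_ball'
      linarith
    have hx0 : μ (ball x ε) = 0 := by
      by_contra hne
      exact h0 (pos_iff_ne_zero.2 hne)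
    have hy0 : μ (ball y (ε / 2)) = 0 := measure_mono_null hsub hx0
    simp [hy0]
  have hA_sub : A ⊆ msupp μ := closure_minimal hPsub hmsupp_closed
  ------------------------------------------------------------------
  -- Part 2 : A is invariant under each F i
  ------------------------------------------------------------------
  have hFA : ∀ i, MapsTo (F i) A A := by
    intro i
    have hPmaps : MapsTo (F i) P A := by
      rintro p ⟨l, hl, hfix⟩
      set G := fold F l with hG_def
      set K := (l.map r).prod with hK_def
      have hK : ContractingWith K G := fold_contracting F r hr l hl
      have hGfix : Function.IsFixedPt G p := hfix
      have hHc : ∀ n : ℕ, ContractingWith (r i * K) (F i ∘ G^[n + 1]) := by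
        intro n
        constructor
        · calc r i * K ≤ r i * 1 := mul_le_mul_right hK.1.le _
            _ = r i := mul_one _
            _ < 1 := (hr i).1
        · refine ((hr i).2.comp (hK.2.iterate (n + 1))).weaken ?_
          refine mul_le_mul_right ?_ _
          calc K ^ (n + 1) = K ^ n * K := pow_succ K n
            _ ≤ 1 * K := mul_le_mul_left (pow_le_one' hK.1.le n) K
            _ = K := one_mul K
      set q : ℕ → X := fun n => ContractingWith.fixedPoint (F i ∘ G^[n + 1]) (hHc n)
        with hq_def
      have hqP : ∀ n, q n ∈ P := by
        intro n
        refine ⟨i :: (List.replicate (n + 1) l).flatten, by simp, ?_⟩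
        show fold F (i :: (List.replicate (n + 1) l).flatten) (q n) = q n
        rw [fold_cons_eq]
        have h2 : fold F (List.replicate (n + 1) l).flatten (q n) = G^[n + 1] (q n) :=
          fold_flatten_replicate F l (n + 1) (q n)
        simp only [Function.comp_apply, h2]
        exact ContractingWith.fixedPoint_isFixedPt (hHc n)
      -- q n → F i p
      have hden : (0 : ℝ) < 1 - ((r i * K : ℝ≥0) : ℝ) := by
        rw [sub_pos]
        exact_mod_cast (hHc 0).1
      have hdist : ∀ n, dist (F i p) (q n)
          ≤ ((r i : ℝ) * ((K : ℝ) ^ (n + 1) * dist p (F i p))) / (1 - ((r i * K : ℝ≥0) : ℝ)) := by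
        intro n
        refine (ContractingWith.dist_fixedPoint_le (hHc n) (F i p)).trans ?_
        have hnum : dist (F i p) ((F i ∘ G^[n + 1]) (F i p))
            ≤ (r i : ℝ) * ((K : ℝ) ^ (n + 1) * dist p (F i p)) := by
          have h1 : dist (F i p) (F i (G^[n + 1] (F i p)))
              ≤ (r i : ℝ) * dist p (G^[n + 1] (F i p)) := (hr i).2.dist_le_mul _ _
          have h2 : dist p (G^[n + 1] (F i p)) ≤ (K : ℝ) ^ (n + 1) * dist p (F i p) := by
            have h2' := (hK.2.iterate (n + 1)).dist_le_mul p (F i p)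
            rw [show G^[n + 1] p = p from hGfix.iterate (n + 1)] at h2'
            push_cast at h2'
            exact h2'
          calc dist (F i p) ((F i ∘ G^[n + 1]) (F i p))
              ≤ (r i : ℝ) * dist p (G^[n + 1] (F i p)) := h1
            _ ≤ (r i : ℝ) * ((K : ℝ) ^ (n + 1) * dist p (F i p)) :=
                mul_le_mul_of_nonneg_left h2 (r i).coe_nonneg
        exact div_le_div_of_nonneg_right hnum hden.le
      have htend0 : Filter.Tendsto (fun n : ℕ => ((r i : ℝ) * ((K : ℝ) ^ (n + 1) * dist p (F i p)))
          / (1 - ((r i * K : ℝ≥0) : ℝ))) Filter.atTop (nhds 0) := by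
        have hpow : Filter.Tendsto (fun n : ℕ => (K : ℝ) ^ (n + 1)) Filter.atTop (nhds 0) :=
          (tendsto_pow_atTop_nhds_zero_of_lt_one K.coe_nonneg
            (by exact_mod_cast hK.1)).comp (Filter.tendsto_add_atTop_nat 1)
        have := ((hpow.mul_const (dist p (F i p))).const_mul ((r i : ℝ))).div_const
          (1 - ((r i * K : ℝ≥0) : ℝ))
        simpa using this
      have hq_tend : Filter.Tendsto q Filter.atTop (nhds (F i p)) := by
        rw [tendsto_iff_dist_tendsto_zero]
        exact squeeze_zero (fun n => dist_nonneg)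
          (fun n => by rw [dist_comm]; exact hdist n) htend0
      exact mem_closure_of_tendsto hq_tend (Filter.Eventually.of_forall hqP)
    -- extend to the closure
    intro x hx
    have h1 : F i x ∈ F i '' A := mem_image_of_mem _ hx
    have h2 : F i '' A ⊆ closure (F i '' P) := by
      rw [hA_def]
      exact image_closure_subset_closure_image (hr i).2.continuous
    have h3 : closure (F i '' P) ⊆ A :=
      (closure_mono hPmaps.image_subset).trans hAclosed.closure_eq.subset
    exact h3 (h2 h1)
  ------------------------------------------------------------------
  -- Part 3 : μ Aᶜ = 0
  ------------------------------------------------------------------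
  -- distance to A, as an ℝ≥0∞-valued function
  set d' : X → ℝ≥0∞ := fun x => ENNReal.ofReal (infDist x A) with hd'_def
  have hd'm : Measurable d' :=
    (ENNReal.continuous_ofReal.comp (continuous_infDist_pt A)).measurable
  have hinfc : ∀ i x, infDist (F i x) A ≤ (r i : ℝ) * infDist x A := by
    intro i x
    refine le_of_forall_pos_le_add fun ε hε => ?_
    obtain ⟨a, haA, hax⟩ := (infDist_lt_iff hAne).1
      (lt_add_of_pos_right (infDist x A) hε)
    calc infDist (F i x) A ≤ dist (F i x) (F i a) := infDist_le_dist_of_mem (hFA i haA)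
      _ ≤ (r i : ℝ) * dist x a := (hr i).2.dist_le_mul _ _
      _ ≤ (r i : ℝ) * (infDist x A + ε) :=
          mul_le_mul_of_nonneg_left hax.le (r i).coe_nonneg
      _ = (r i : ℝ) * infDist x A + (r i : ℝ) * ε := mul_add _ _ _
      _ ≤ (r i : ℝ) * infDist x A + ε := by
          have h1 : (r i : ℝ) ≤ 1 := by exact_mod_cast (hr i).1.le
          nlinarith
  have hd'F : ∀ i x, d' (F i x) ≤ (r i : ℝ≥0∞) * d' x := by
    intro i x
    calc d' (F i x) ≤ ENNReal.ofReal ((r i : ℝ) * infDist x A) :=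
          ENNReal.ofReal_le_ofReal (hinfc i x)
      _ = (r i : ℝ≥0∞) * d' x := by
          rw [ENNReal.ofReal_mul (r i).coe_nonneg, ENNReal.ofReal_coe_nnreal]
  -- the ratio sum s < 1
  have hρsum : Summable ρ := by
    by_contra h
    rw [tsum_eq_zero_of_not_summable h] at hρs
    exact one_ne_zero hρs.symm
  have hρs' : ∑' i, ((ρ i : ℝ≥0∞)) = 1 := by
    rw [← ENNReal.coe_tsum hρsum, hρs, ENNReal.coe_one]
  set s : ℝ≥0∞ := ∑' i, (ρ i : ℝ≥0∞) * (r i : ℝ≥0∞) with hs_def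
  have hterm_le : ∀ i, (ρ i : ℝ≥0∞) * (r i : ℝ≥0∞) ≤ (ρ i : ℝ≥0∞) := by
    intro i
    calc (ρ i : ℝ≥0∞) * (r i : ℝ≥0∞) ≤ (ρ i : ℝ≥0∞) * 1 :=
          mul_le_mul_right (by exact_mod_cast (hr i).1.le) _
      _ = (ρ i : ℝ≥0∞) := mul_one _
  have hs_le : s ≤ 1 := by
    rw [hs_def, ← hρs']
    exact ENNReal.tsum_le_tsum hterm_le
  have hs_lt : s < 1 := by
    set ε : ℝ≥0∞ := (ρ 0 : ℝ≥0∞) * (1 - (r 0 : ℝ≥0∞)) with hε_def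
    have hεne : ε ≠ 0 := by
      refine mul_ne_zero (by exact_mod_cast (hρ 0).1.ne') ?_
      rw [← pos_iff_ne_zero, tsub_pos_iff_lt]
      exact_mod_cast (hr 0).1
    have hsum2 : s + ε ≤ 1 := by
      have hr0le : ((r 0 : ℝ≥0∞)) ≤ 1 := by exact_mod_cast (hr 0).1.le
      have hcomb : (ρ 0 : ℝ≥0∞) * (r 0 : ℝ≥0∞) + ε = (ρ 0 : ℝ≥0∞) := by
        rw [hε_def, ← mul_add, add_tsub_cancel_of_le hr0le, mul_one]
      have hsplit1 : s + ε = ∑' i, ((ρ i : ℝ≥0∞) * (r i : ℝ≥0∞)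
          + if i = 0 then ε else 0) := by
        rw [ENNReal.tsum_add, tsum_ite_eq, hs_def]
      have hterm : ∀ i, (ρ i : ℝ≥0∞) * (r i : ℝ≥0∞) + (if i = 0 then ε else 0)
          ≤ (ρ i : ℝ≥0∞) := by
        intro i
        by_cases h : i = 0
        · subst h
          simp only [if_pos rfl]
          exact hcomb.le
        · simp only [if_neg h, add_zero]
          exact hterm_le i
      calc s + ε = ∑' i, ((ρ i : ℝ≥0∞) * (r i : ℝ≥0∞) + if i = 0 then ε else 0) := hsplit1
        _ ≤ ∑' i, ((ρ i : ℝ≥0∞)) := ENNReal.tsum_le_tsum hterm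
        _ = 1 := hρs'
    refine lt_of_le_of_ne hs_le fun hseq => hεne ?_
    rw [hseq] at hsum2
    have h9 : (1 : ℝ≥0∞) + ε ≤ 1 + 0 := by simpa using hsum2
    exact le_antisymm ((ENNReal.add_le_add_iff_left ENNReal.one_ne_top).1 h9) zero_le'
  -- the truncated integrals J
  have hintm : ∀ α : ℝ≥0∞, Measurable fun x => min (α * d' x) 1 :=
    fun α => (measurable_const.mul hd'm).min measurable_const
  set J : ℝ≥0∞ → ℝ≥0∞ := fun α => ∫⁻ x, min (α * d' x) 1 ∂μ with hJ_def
  have hlin : ∀ (h : X → ℝ≥0∞), Measurable h →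
      ∫⁻ x, h x ∂μ = ∑' i, (ρ i : ℝ≥0∞) * ∫⁻ x, h (F i x) ∂μ := by
    intro h hh
    conv_lhs => rw [hinv]
    rw [lintegral_sum_measure]
    exact tsum_congr fun i => by rw [lintegral_smul_measure, lintegral_map hh (hFm i), smul_eq_mul]
  have hstep : ∀ α : ℝ≥0∞, J α ≤ ∑' i, (ρ i : ℝ≥0∞) * J (α * (r i : ℝ≥0∞)) := by
    intro α
    rw [hJ_def]
    simp only
    rw [hlin (fun x => min (α * d' x) 1) (hintm α)]
    refine ENNReal.tsum_le_tsum fun i => mul_le_mul_right (lintegral_mono fun x => ?_) _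
    refine min_le_min ?_ le_rfl
    calc α * d' (F i x) ≤ α * ((r i : ℝ≥0∞) * d' x) := mul_le_mul_right (hd'F i x) α
      _ = α * (r i : ℝ≥0∞) * d' x := (mul_assoc _ _ _).symm
  set E : ℕ → Set X := fun N => {x | (N : ℝ≥0∞) < d' x} with hE_def
  have hEm : ∀ N, MeasurableSet (E N) := fun N => hd'm measurableSet_Ioi
  have hbase : ∀ (α : ℝ≥0∞) (N : ℕ), J α ≤ α * N + μ (E N) := by
    intro α N
    have hpt : ∀ x, min (α * d' x) 1 ≤ α * N + (E N).indicator 1 x := by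
      intro x
      by_cases h : d' x ≤ N
      · exact le_add_right ((min_le_left _ _).trans (mul_le_mul_right h α))
      · push_neg at h
        refine (min_le_right _ _).trans ?_
        have h1 : (E N).indicator (1 : X → ℝ≥0∞) x = 1 := indicator_of_mem h 1
        rw [h1]
        exact le_add_self
    calc J α ≤ ∫⁻ x, (α * N + (E N).indicator 1 x) ∂μ := lintegral_mono hpt
      _ = α * N * μ Set.univ + μ (E N) := by
          rw [lintegral_add_left measurable_const, lintegral_const,
            lintegral_indicator_one (hEm N)]
      _ = α * N + μ (E N) := by rw [measure_univ, mul_one]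
  have hindN : ∀ (n : ℕ) (α : ℝ≥0∞) (N : ℕ), J α ≤ α * s ^ n * N + μ (E N) := by
    intro n
    induction n with
    | zero => intro α N; simpa using hbase α N
    | succ n ih =>
        intro α N
        calc J α ≤ ∑' i, (ρ i : ℝ≥0∞) * J (α * (r i : ℝ≥0∞)) := hstep α
          _ ≤ ∑' i, (ρ i : ℝ≥0∞) * ((α * (r i : ℝ≥0∞)) * s ^ n * N + μ (E N)) :=
              ENNReal.tsum_le_tsum fun i => mul_le_mul_right (ih _ N) _
          _ = ∑' i, (((ρ i : ℝ≥0∞) * (r i : ℝ≥0∞)) * (α * s ^ n * N) + (ρ i : ℝ≥0∞) * μ (E N)) := by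
              refine tsum_congr fun i => ?_
              ring
          _ = (∑' i, ((ρ i : ℝ≥0∞) * (r i : ℝ≥0∞)) * (α * s ^ n * N))
              + ∑' i, (ρ i : ℝ≥0∞) * μ (E N) := ENNReal.tsum_add
          _ = s * (α * s ^ n * N) + 1 * μ (E N) := by
              rw [ENNReal.tsum_mul_right, ENNReal.tsum_mul_right, hρs', hs_def]
          _ = α * s ^ (n + 1) * N + μ (E N) := by
              rw [one_mul]
              ring
  have hJ1_le : ∀ N : ℕ, J 1 ≤ μ (E N) := by
    intro N
    have hlim : Filter.Tendsto (fun n : ℕ => (1 : ℝ≥0∞) * s ^ n * N + μ (E N))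
        Filter.atTop (nhds (μ (E N))) := by
      have h1 : Filter.Tendsto (fun n : ℕ => s ^ n) Filter.atTop (nhds 0) :=
        ENNReal.tendsto_pow_atTop_nhds_zero_of_lt_one hs_lt
      have h2 : Filter.Tendsto (fun n : ℕ => (1 : ℝ≥0∞) * s ^ n * N) Filter.atTop (nhds 0) := by
        have := ENNReal.Tendsto.mul_const h1 (Or.inr (ENNReal.natCast_ne_top N))
        simpa using this
      have := h2.add (tendsto_const_nhds (x := μ (E N)))
      simpa using this
    exact ge_of_tendsto' hlim fun n => hindN n 1 N
  have hJ1 : J 1 = 0 := by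
    have hEanti : Antitone E := by
      intro m n hmn x hx
      have hcast : ((m : ℝ≥0∞)) ≤ (n : ℝ≥0∞) := by exact_mod_cast hmn
      exact lt_of_le_of_lt hcast hx
    have hEinter : (⋂ N : ℕ, E N) = ∅ := by
      ext x
      simp only [mem_iInter, hE_def, mem_setOf_eq, mem_empty_iff_false, iff_false, not_forall,
        not_lt]
      obtain ⟨N, hN⟩ := ENNReal.exists_nat_gt (show d' x ≠ ∞ from ENNReal.ofReal_ne_top)
      exact ⟨N, hN.le⟩
    have hlim2 : Filter.Tendsto (fun N : ℕ => μ (E N)) Filter.atTop (nhds 0) := by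
      have := tendsto_measure_iInter_atTop (fun N => (hEm N).nullMeasurableSet)
        hEanti ⟨0, measure_ne_top μ _⟩
      rw [hEinter] at this
      simpa [Function.comp_def] using this
    have := ge_of_tendsto' hlim2 hJ1_le
    exact le_antisymm this zero_le'
  have hae := (lintegral_eq_zero_iff (hintm 1)).1 hJ1
  have hAc : μ Aᶜ = 0 := by
    rw [Filter.EventuallyEq, ae_iff] at hae
    refine measure_mono_null (fun x hx => ?_) hae
    simp only [mem_setOf_eq, Pi.zero_apply]
    have hpos : 0 < infDist x A := (hAclosed.notMem_iff_infDist_pos hAne).1 hx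
    have hd'pos : 0 < d' x := ENNReal.ofReal_pos.2 hpos
    intro h0
    rw [one_mul] at h0
    have : (0 : ℝ≥0∞) < min (d' x) 1 := lt_min hd'pos zero_lt_one
    rw [h0] at this
    exact lt_irrefl 0 this
  ------------------------------------------------------------------
  -- conclusion
  ------------------------------------------------------------------
  refine subset_antisymm ?_ hA_sub
  intro x hx
  by_contra hxA
  have hAcopen : IsOpen Aᶜ := hAclosed.isOpen_compl
  obtain ⟨ε, hε, hball⟩ := Metric.isOpen_iff.1 hAcopen x hxA
  have h1 : (0 : ℝ≥0∞) < μ (ball x ε) := hx ε hε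
  have h2 : μ (ball x ε) = 0 := measure_mono_null hball hAc
  rw [h2] at h1
  exact lt_irrefl 0 h1
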